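/- For any finite simple graph G of order n > 0, there exists a nonempty set D of vertices with |D ∪ Odd_G(D)| ≤ ⌊n/2⌋ + 1; equivalently, δ_loc(G) ≤ n/2. -/

import Mathlib

open Finset

open Classical in
/-- The odd-neighbourhood of `D` in `G`: vertices having an odd number of neighbours in `D`. -/
noncomputable def oddNbhd {V : Type*} [Fintype V] (G : SimpleGraph V) (D : Finset V) :
    Finset V :=
  Finset.univ.filter fun v => Odd ((D.filter fun u => G.Adj v u).card)

open Classical in
lemma mem_oddNbhd {V : Type*} [Fintype V] (G : SimpleGraph V) (D : Finset V) (v : V) :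
    v ∈ oddNbhd G D ↔ Odd ((D.filter fun u => G.Adj v u).card) := by
  simp [oddNbhd]

lemma oddNbhd_symmDiff {V : Type*} [Fintype V] [DecidableEq V] (G : SimpleGraph V)
    (D D' : Finset V) :
    oddNbhd G (symmDiff D D') = symmDiff (oddNbhd G D) (oddNbhd G D') := by
  classical
  ext v
  rw [Finset.mem_symmDiff, mem_oddNbhd, mem_oddNbhd, mem_oddNbhd]
  have hf : (symmDiff D D').filter (fun u => G.Adj v u)
      = symmDiff (D.filter (fun u => G.Adj v u)) (D'.filter (fun u => G.Adj v u)) := by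
    ext u
    simp only [Finset.mem_symmDiff, Finset.mem_filter]
    tauto
  rw [hf]
  set A := D.filter (fun u => G.Adj v u)
  set B := D'.filter (fun u => G.Adj v u)
  have hcard : (symmDiff A B).card = (A \ B).card + (B \ A).card := by
    rw [symmDiff_def]
    exact Finset.card_union_of_disjoint (disjoint_sdiff_sdiff)
  have h1 : (A \ B).card + (A ∩ B).card = A.card := Finset.card_sdiff_add_card_inter A B
  have h2 : (B \ A).card + (B ∩ A).card = B.card := Finset.card_sdiff_add_card_inter B A
  have h3 : (A ∩ B).card = (B ∩ A).card := by rw [Finset.inter_comm]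
  simp only [Nat.odd_iff]
  omega

/-- For any finite simple graph `G` of order `n > 0`, there is a nonempty set `D` of vertices
with `|D ∪ Odd_G(D)| ≤ ⌊n/2⌋ + 1`; equivalently `δ_loc(G) ≤ n/2`, where
`δ_loc(G) + 1 = min_{∅ ≠ D ⊆ V} |D ∪ Odd_G(D)|`. -/
theorem dloc_le_half {V : Type*} [Fintype V] [DecidableEq V]
    (G : SimpleGraph V)
    (hn : 0 < Fintype.card V) (dloc : ℕ)
    (hd : dloc + 1 = sInf {m : ℕ | ∃ D : Finset V, D.Nonempty ∧ (D ∪ oddNbhd G D).card = m}) :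
    (∃ D : Finset V, D.Nonempty ∧ (D ∪ oddNbhd G D).card ≤ Fintype.card V / 2 + 1) ∧
      (dloc : ℝ) ≤ (Fintype.card V : ℝ) / 2 := by
  classical
  set n := Fintype.card V with hncard
  set m := n / 2 + 1 with hm
  have hmn : m ≤ n := by omega
  -- choose a set T of size n - m
  obtain ⟨T, hTsub, hTcard⟩ := Finset.exists_subset_card_eq
    (s := (Finset.univ : Finset V)) (n := n - m) (by rw [Finset.card_univ]; omega)
  -- pigeonhole: the map D ↦ (D ∩ T, oddNbhd G D ∩ T) is not injective
  have hcardlt : (T.powerset ×ˢ T.powerset).card < (Finset.univ : Finset V).powerset.card := by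
    simp only [Finset.card_product, Finset.card_powerset, Finset.card_univ, hTcard, ← pow_add]
    exact Nat.pow_lt_pow_right one_lt_two (by omega)
  obtain ⟨D, -, D', -, hne, heq⟩ :=
    Finset.exists_ne_map_eq_of_card_lt_of_maps_to hcardlt
      (f := fun D => (D ∩ T, oddNbhd G D ∩ T))
      (fun D _ => by
        simp only [Finset.mem_product, Finset.mem_powerset]
        exact Finset.mem_product.mpr ⟨Finset.mem_powerset.mpr Finset.inter_subset_right,
          Finset.mem_powerset.mpr Finset.inter_subset_right⟩)
  have h1 : D ∩ T = D' ∩ T := congrArg Prod.fst heq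
  have h2 : oddNbhd G D ∩ T = oddNbhd G D' ∩ T := congrArg Prod.snd heq
  set E := symmDiff D D' with hE
  have hEne : E.Nonempty := by
    rw [Finset.nonempty_iff_ne_empty]
    intro h
    exact hne (by simpa [hE, symmDiff_eq_bot] using h)
  have hET : E ∩ T = ∅ := by
    ext u
    have := Finset.ext_iff.mp h1 u
    simp only [Finset.mem_inter, Finset.mem_symmDiff, hE, Finset.notMem_empty, iff_false] at *
    tauto
  have hOT : oddNbhd G E ∩ T = ∅ := by
    rw [hE, oddNbhd_symmDiff]
    ext u
    have := Finset.ext_iff.mp h2 u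
    simp only [Finset.mem_inter, Finset.mem_symmDiff, Finset.notMem_empty, iff_false] at *
    tauto
  have hsub : E ∪ oddNbhd G E ⊆ Finset.univ \ T := by
    intro u hu
    rw [Finset.mem_sdiff]
    refine ⟨Finset.mem_univ u, ?_⟩
    intro huT
    rcases Finset.mem_union.mp hu with h | h
    · exact Finset.notMem_empty u (hET ▸ Finset.mem_inter.mpr ⟨h, huT⟩)
    · exact Finset.notMem_empty u (hOT ▸ Finset.mem_inter.mpr ⟨h, huT⟩)
  have hcardE : (E ∪ oddNbhd G E).card ≤ m := by
    calc (E ∪ oddNbhd G E).card ≤ (Finset.univ \ T).card := Finset.card_le_card hsub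
    _ = n - (n - m) := by rw [Finset.card_sdiff_of_subset hTsub, Finset.card_univ, hTcard]
    _ ≤ m := by omega
  have hmain : ∃ D : Finset V, D.Nonempty ∧ (D ∪ oddNbhd G D).card ≤ n / 2 + 1 :=
    ⟨E, hEne, by omega⟩
  refine ⟨hmain, ?_⟩
  have hmem : (E ∪ oddNbhd G E).card ∈
      {m : ℕ | ∃ D : Finset V, D.Nonempty ∧ (D ∪ oddNbhd G D).card = m} := ⟨E, hEne, rfl⟩
  have hinf := Nat.sInf_le hmem
  rw [← hd] at hinf
  have hdn : 2 * dloc ≤ n := by omega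
  rw [le_div_iff₀ (by norm_num : (0:ℝ) < 2)]
  calc (dloc : ℝ) * 2 = ((2 * dloc : ℕ) : ℝ) := by push_cast; ring
  _ ≤ (n : ℝ) := by exact_mod_cast hdn
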